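/- Let C be a monoidal category and let (D, Δ_D, ε_D) and (C', Δ_{C'}, ε_{C'}) be comonoid objects in C. Suppose λ : D ⊗ C' ⟶ C' ⊗ D is a distributive law, i.e. (suppressing associators and unitors) it satisfies: (I) (id_{C'} ⊗ Δ_D) ∘ λ = (λ ⊗ id_D) ∘ (id_D ⊗ λ) ∘ (Δ_D ⊗ id_{C'}); (II) (Δ_{C'} ⊗ id_D) ∘ λ = (id_{C'} ⊗ λ) ∘ (λ ⊗ id_{C'}) ∘ (id_D ⊗ Δ_{C'}); (i) (id_{C'} ⊗ ε_D) ∘ λ = ε_D ⊗ id_{C'} as morphisms D ⊗ C' ⟶ C'; (ii) (ε_{C'} ⊗ id_D) ∘ λ = id_D ⊗ ε_{C'} as morphisms D ⊗ C' ⟶ D. Then the object D ⊗ C' carries a comonoid structure with comultiplication Δ_λ := (id_D ⊗ λ ⊗ id_{C'}) ∘ (Δ_D ⊗ Δ_{C'}) : D ⊗ C' ⟶ (D ⊗ C') ⊗ (D ⊗ C') and counit ε_λ := ε_D ⊗ ε_{C'} : D ⊗ C' ⟶ 𝟙 (i.e. Δ_λ is coassociative and ε_λ is a two-sided counit for it).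 -/

import Mathlib

open CategoryTheory MonoidalCategory

set_option maxHeartbeats 4000000 in
/-- **Distributive law for comonoids.** If `D` and `C'` are comonoid objects in a monoidal
category `C` and `l : D ⊗ C' ⟶ C' ⊗ D` is a distributive law (satisfying the pentagon-type
compatibilities (I), (II) with the comultiplications and (i), (ii) with the counits), then
`D ⊗ C'` is again a comonoid object with comultiplication
`Δ_λ = (id_D ⊗ l ⊗ id_{C'}) ∘ (Δ_D ⊗ Δ_{C'})` and counit `ε_λ = ε_D ⊗ ε_{C'}`. -/
theorem comon_distributive_law {C : Type*} [Category C] [MonoidalCategory C]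
    (D C' : C)
    (ΔD : D ⟶ D ⊗ D) (εD : D ⟶ 𝟙_ C) (ΔC : C' ⟶ C' ⊗ C') (εC : C' ⟶ 𝟙_ C)
    (hD_counit₁ : ΔD ≫ (εD ▷ D) = (λ_ D).inv)
    (hD_counit₂ : ΔD ≫ (D ◁ εD) = (ρ_ D).inv)
    (hD_coassoc : ΔD ≫ (D ◁ ΔD) = ΔD ≫ (ΔD ▷ D) ≫ (α_ D D D).hom)
    (hC_counit₁ : ΔC ≫ (εC ▷ C') = (λ_ C').inv)
    (hC_counit₂ : ΔC ≫ (C' ◁ εC) = (ρ_ C').inv)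
    (hC_coassoc : ΔC ≫ (C' ◁ ΔC) = ΔC ≫ (ΔC ▷ C') ≫ (α_ C' C' C').hom)
    (l : D ⊗ C' ⟶ C' ⊗ D)
    (hI : l ≫ (C' ◁ ΔD) =
      (ΔD ▷ C') ≫ (α_ D D C').hom ≫ (D ◁ l) ≫ (α_ D C' D).inv ≫ (l ▷ D) ≫ (α_ C' D D).hom)
    (hII : l ≫ (ΔC ▷ D) =
      (D ◁ ΔC) ≫ (α_ D C' C').inv ≫ (l ▷ C') ≫ (α_ C' D C').hom ≫ (C' ◁ l) ≫
        (α_ C' C' D).inv)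
    (hi : l ≫ (C' ◁ εD) ≫ (ρ_ C').hom = (εD ▷ C') ≫ (λ_ C').hom)
    (hii : l ≫ (εC ▷ D) ≫ (λ_ D).hom = (D ◁ εC) ≫ (ρ_ D).hom)
    (Δl : D ⊗ C' ⟶ (D ⊗ C') ⊗ (D ⊗ C'))
    (hΔl : Δl = (ΔD ⊗ₘ ΔC) ≫ (α_ D D (C' ⊗ C')).hom ≫ (D ◁ (α_ D C' C').inv) ≫
      (D ◁ (l ▷ C')) ≫ (D ◁ (α_ C' D C').hom) ≫ (α_ D C' (D ⊗ C')).inv)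
    (εl : D ⊗ C' ⟶ 𝟙_ C)
    (hεl : εl = (εD ⊗ₘ εC) ≫ (λ_ (𝟙_ C)).hom) :
    (Δl ≫ (εl ▷ (D ⊗ C')) = (λ_ (D ⊗ C')).inv) ∧
    (Δl ≫ ((D ⊗ C') ◁ εl) = (ρ_ (D ⊗ C')).inv) ∧
    (Δl ≫ ((D ⊗ C') ◁ Δl) =
      Δl ≫ (Δl ▷ (D ⊗ C')) ≫ (α_ (D ⊗ C') (D ⊗ C') (D ⊗ C')).hom) := by
  subst hΔl hεl
  refine ⟨?_, ?_, ?_⟩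
  · -- left counit
    calc _ = (ΔD ▷ C') ⊗≫ (D ◁ (D ◁ ΔC)) ⊗≫
          (D ◁ ((l ≫ (εC ▷ D) ≫ (λ_ D).hom) ▷ C')) ⊗≫ (εD ▷ (D ⊗ C')) ⊗≫
          𝟙 (𝟙_ C ⊗ (D ⊗ C')) := by
          rw [tensorHom_def ΔD ΔC, tensorHom_def' εD εC]; monoidal
      _ = (ΔD ▷ C') ⊗≫ (D ◁ (D ◁ (ΔC ≫ (εC ▷ C')))) ⊗≫ (εD ▷ (D ⊗ C')) ⊗≫
          𝟙 (𝟙_ C ⊗ (D ⊗ C')) := by rw [hii]; monoidal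
      _ = ((ΔD ≫ (εD ▷ D)) ▷ C') ⊗≫ 𝟙 (𝟙_ C ⊗ (D ⊗ C')) := by
          rw [hC_counit₁]; monoidal
      _ = (λ_ (D ⊗ C')).inv := by rw [hD_counit₁]; monoidal
  · -- right counit
    calc _ = (D ◁ ΔC) ⊗≫ (ΔD ▷ (C' ⊗ C')) ⊗≫
          (D ◁ ((l ≫ (C' ◁ εD) ≫ (ρ_ C').hom) ▷ C')) ⊗≫ (D ◁ (C' ◁ εC)) ⊗≫
          𝟙 ((D ⊗ C') ⊗ 𝟙_ C) := by
          rw [tensorHom_def' ΔD ΔC, tensorHom_def εD εC]; monoidal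
      _ = (D ◁ ΔC) ⊗≫ ((ΔD ≫ (D ◁ εD)) ▷ (C' ⊗ C')) ⊗≫ (D ◁ (C' ◁ εC)) ⊗≫
          𝟙 ((D ⊗ C') ⊗ 𝟙_ C) := by rw [hi]; monoidal
      _ = (D ◁ (ΔC ≫ (C' ◁ εC))) ⊗≫ 𝟙 ((D ⊗ C') ⊗ 𝟙_ C) := by
          rw [hD_counit₂]; monoidal
      _ = (ρ_ (D ⊗ C')).inv := by rw [hC_counit₂]; monoidal
  · -- coassociativity
    have hL : ((ΔD ⊗ₘ ΔC) ≫ (α_ D D (C' ⊗ C')).hom ≫ (D ◁ (α_ D C' C').inv) ≫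
      (D ◁ (l ▷ C')) ≫ (D ◁ (α_ C' D C').hom) ≫ (α_ D C' (D ⊗ C')).inv) ≫
      ((D ⊗ C') ◁ ((ΔD ⊗ₘ ΔC) ≫ (α_ D D (C' ⊗ C')).hom ≫ (D ◁ (α_ D C' C').inv) ≫
      (D ◁ (l ▷ C')) ≫ (D ◁ (α_ C' D C').hom) ≫ (α_ D C' (D ⊗ C')).inv)) =
        ((ΔD ≫ (ΔD ▷ D)) ▷ C') ⊗≫
      (((D ⊗ D) ⊗ D) ◁ (ΔC ≫ (C' ◁ ΔC))) ⊗≫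
      (D ◁ (((D ◁ l) ≫ (α_ D C' D).inv ≫ (l ▷ D)) ▷ (C' ⊗ C'))) ⊗≫
      (D ◁ ((C' ⊗ D) ◁ (l ▷ C'))) ⊗≫
      𝟙 ((D ⊗ C') ⊗ ((D ⊗ C') ⊗ (D ⊗ C'))) := by
      calc _ = (ΔD ▷ C') ⊗≫ ((D ⊗ D) ◁ ΔC) ⊗≫ (D ◁ ((l ≫ (C' ◁ ΔD)) ▷ C')) ⊗≫
            (D ◁ (C' ◁ ((D ⊗ D) ◁ ΔC))) ⊗≫ (D ◁ (C' ◁ (D ◁ (l ▷ C')))) ⊗≫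
            𝟙 ((D ⊗ C') ⊗ ((D ⊗ C') ⊗ (D ⊗ C'))) := by
            simp only [MonoidalCategory.tensorHom_def]; monoidal
        _ = (ΔD ▷ C') ⊗≫ (((D ⊗ D) ◁ ΔC) ≫ ((D ◁ ΔD) ▷ (C' ⊗ C'))) ⊗≫
            (D ◁ (((D ◁ l) ≫ (α_ D C' D).inv ≫ (l ▷ D)) ▷ C')) ⊗≫
            (D ◁ (C' ◁ ((D ⊗ D) ◁ ΔC))) ⊗≫ (D ◁ (C' ◁ (D ◁ (l ▷ C')))) ⊗≫
            𝟙 ((D ⊗ C') ⊗ ((D ⊗ C') ⊗ (D ⊗ C'))) := by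
            rw [hI]; monoidal
        _ = ((ΔD ≫ (D ◁ ΔD)) ▷ C') ⊗≫
            ((D ⊗ (D ⊗ D)) ◁ ΔC) ⊗≫
            (D ◁ ((((D ◁ l) ≫ (α_ D C' D).inv ≫ (l ▷ D)) ▷ C') ≫
              (((C' ⊗ D) ⊗ D) ◁ ΔC))) ⊗≫ (D ◁ (C' ◁ (D ◁ (l ▷ C')))) ⊗≫
            𝟙 ((D ⊗ C') ⊗ ((D ⊗ C') ⊗ (D ⊗ C'))) := by
            rw [whisker_exchange (D ◁ ΔD) ΔC]; monoidal
        _ = ((ΔD ≫ (ΔD ▷ D)) ▷ C') ⊗≫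
            (((D ⊗ D) ⊗ D) ◁ ΔC) ⊗≫
            (D ◁ (((D ⊗ (D ⊗ C')) ◁ ΔC) ≫
              (((D ◁ l) ≫ (α_ D C' D).inv ≫ (l ▷ D)) ▷ (C' ⊗ C')))) ⊗≫
            (D ◁ ((C' ⊗ D) ◁ (l ▷ C'))) ⊗≫
            𝟙 ((D ⊗ C') ⊗ ((D ⊗ C') ⊗ (D ⊗ C'))) := by
            rw [hD_coassoc, ← whisker_exchange ((D ◁ l) ≫ (α_ D C' D).inv ≫ (l ▷ D)) ΔC]
            monoidal
        _ = ((ΔD ≫ (ΔD ▷ D)) ▷ C') ⊗≫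
          (((D ⊗ D) ⊗ D) ◁ (ΔC ≫ (C' ◁ ΔC))) ⊗≫
          (D ◁ (((D ◁ l) ≫ (α_ D C' D).inv ≫ (l ▷ D)) ▷ (C' ⊗ C'))) ⊗≫
          (D ◁ ((C' ⊗ D) ◁ (l ▷ C'))) ⊗≫
          𝟙 ((D ⊗ C') ⊗ ((D ⊗ C') ⊗ (D ⊗ C'))) := by monoidal
    have hR : ((ΔD ⊗ₘ ΔC) ≫ (α_ D D (C' ⊗ C')).hom ≫ (D ◁ (α_ D C' C').inv) ≫
      (D ◁ (l ▷ C')) ≫ (D ◁ (α_ C' D C').hom) ≫ (α_ D C' (D ⊗ C')).inv) ≫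
      (((ΔD ⊗ₘ ΔC) ≫ (α_ D D (C' ⊗ C')).hom ≫ (D ◁ (α_ D C' C').inv) ≫
      (D ◁ (l ▷ C')) ≫ (D ◁ (α_ C' D C').hom) ≫ (α_ D C' (D ⊗ C')).inv) ▷ (D ⊗ C')) ≫
      (α_ (D ⊗ C') (D ⊗ C') (D ⊗ C')).hom =
        ((ΔD ≫ (ΔD ▷ D)) ▷ C') ⊗≫
      (((D ⊗ D) ⊗ D) ◁ (ΔC ≫ (C' ◁ ΔC))) ⊗≫
      (D ◁ (((D ◁ l) ≫ (α_ D C' D).inv ≫ (l ▷ D)) ▷ (C' ⊗ C'))) ⊗≫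
      (D ◁ ((C' ⊗ D) ◁ (l ▷ C'))) ⊗≫
      𝟙 ((D ⊗ C') ⊗ ((D ⊗ C') ⊗ (D ⊗ C'))) := by
      calc _ = (ΔD ▷ C') ⊗≫ ((D ⊗ D) ◁ ΔC) ⊗≫
            ((D ◁ (l ▷ C')) ≫ (ΔD ▷ ((C' ⊗ D) ⊗ C'))) ⊗≫
            ((D ⊗ D) ◁ ((ΔC ▷ D) ▷ C')) ⊗≫ (D ◁ (l ▷ (C' ⊗ (D ⊗ C')))) ⊗≫
            𝟙 ((D ⊗ C') ⊗ ((D ⊗ C') ⊗ (D ⊗ C'))) := by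
            simp only [MonoidalCategory.tensorHom_def]; monoidal
        _ = (ΔD ▷ C') ⊗≫ ((D ⊗ D) ◁ ΔC) ⊗≫ (ΔD ▷ ((D ⊗ C') ⊗ C')) ⊗≫
            ((D ⊗ D) ◁ ((l ≫ (ΔC ▷ D)) ▷ C')) ⊗≫ (D ◁ (l ▷ (C' ⊗ (D ⊗ C')))) ⊗≫
            𝟙 ((D ⊗ C') ⊗ ((D ⊗ C') ⊗ (D ⊗ C'))) := by
            rw [whisker_exchange ΔD (l ▷ C')]; monoidal
        _ = (ΔD ▷ C') ⊗≫ (((D ⊗ D) ◁ ΔC) ≫ ((ΔD ▷ D) ▷ (C' ⊗ C'))) ⊗≫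
            (((D ⊗ D) ⊗ D) ◁ (ΔC ▷ C')) ⊗≫ ((D ⊗ D) ◁ (l ▷ (C' ⊗ C'))) ⊗≫
            (((D ⊗ D) ⊗ C') ◁ (l ▷ C')) ⊗≫ (D ◁ (l ▷ (C' ⊗ (D ⊗ C')))) ⊗≫
            𝟙 ((D ⊗ C') ⊗ ((D ⊗ C') ⊗ (D ⊗ C'))) := by
            rw [hII]; monoidal
        _ = ((ΔD ≫ (ΔD ▷ D)) ▷ C') ⊗≫
            (((D ⊗ D) ⊗ D) ◁ (ΔC ≫ (ΔC ▷ C') ≫ (α_ C' C' C').hom)) ⊗≫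
            ((D ⊗ D) ◁ (l ▷ (C' ⊗ C'))) ⊗≫ (((D ⊗ D) ⊗ C') ◁ (l ▷ C')) ⊗≫
            (D ◁ (l ▷ (C' ⊗ (D ⊗ C')))) ⊗≫
            𝟙 ((D ⊗ C') ⊗ ((D ⊗ C') ⊗ (D ⊗ C'))) := by
            rw [whisker_exchange (ΔD ▷ D) ΔC]; monoidal
        _ = ((ΔD ≫ (ΔD ▷ D)) ▷ C') ⊗≫
            (((D ⊗ D) ⊗ D) ◁ (ΔC ≫ (C' ◁ ΔC))) ⊗≫
            ((D ⊗ D) ◁ (l ▷ (C' ⊗ C'))) ⊗≫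
            (D ◁ (((D ⊗ C') ◁ (l ▷ C')) ≫ (l ▷ ((C' ⊗ D) ⊗ C')))) ⊗≫
            𝟙 ((D ⊗ C') ⊗ ((D ⊗ C') ⊗ (D ⊗ C'))) := by
            rw [← hC_coassoc]; monoidal
        _ = ((ΔD ≫ (ΔD ▷ D)) ▷ C') ⊗≫
          (((D ⊗ D) ⊗ D) ◁ (ΔC ≫ (C' ◁ ΔC))) ⊗≫
          (D ◁ (((D ◁ l) ≫ (α_ D C' D).inv ≫ (l ▷ D)) ▷ (C' ⊗ C'))) ⊗≫
          (D ◁ ((C' ⊗ D) ◁ (l ▷ C'))) ⊗≫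
          𝟙 ((D ⊗ C') ⊗ ((D ⊗ C') ⊗ (D ⊗ C'))) := by
            rw [whisker_exchange l (l ▷ C')]; monoidal
    exact hL.trans hR.symm
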